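/- Let (Σ, τ) be a subshift without isolated periodic points, S a finite symmetric subset of [[τ]]. There exists l_0 ∈ ℕ such that for all n > 0, l > l_0, all h_1,…,h_n ∈ S with partial products g_j = h_j⋯h_1, every non-empty cylinder C_w of depth l, and every non-periodic x ∈ C_w satisfying max_{j≤n}|k_{g_j}(x)| ≤ l - l_0, the restriction of each orbit cocycle k_{g_j} to C_w is constant. -/

import Mathlib

open Filter

/-- The shift on bi-infinite sequences, as a bijection. -/
def shiftE {A : Type*} : (ℤ → A) ≃ (ℤ → A) where
  toFun x i := x (i + 1)
  invFun x i := x (i - 1)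
  left_inv x := by funext i; simp
  right_inv x := by funext i; simp

/-- The cylinder of depth `l` determined by the word `w` (the letters `w i` for `|i| ≤ l`),
inside the subshift `Sub`. -/
def cylinder {A : Type*} (Sub : Set (ℤ → A)) (w : ℤ → A) (l : ℕ) : Set (ℤ → A) :=
  {x ∈ Sub | ∀ i : ℤ, |i| ≤ (l : ℤ) → x i = w i}

lemma shiftE_pow {A : Type*} (n : ℕ) (x : ℤ → A) (i : ℤ) :
    ((shiftE ^ n : Equiv.Perm (ℤ → A)) x) i = x (i + n) := by
  induction n generalizing i with
  | zero => simp
  | succ n ih =>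
    rw [pow_succ']
    have : ((shiftE * shiftE ^ n : Equiv.Perm (ℤ → A)) x) i
        = ((shiftE ^ n : Equiv.Perm (ℤ → A)) x) (i + 1) := rfl
    rw [this, ih]
    congr 1; push_cast; ring

lemma shiftE_zpow {A : Type*} (m : ℤ) (x : ℤ → A) (i : ℤ) :
    ((shiftE ^ m : Equiv.Perm (ℤ → A)) x) i = x (i + m) := by
  cases m with
  | ofNat n => rw [Int.ofNat_eq_natCast, zpow_natCast]; exact shiftE_pow n x i
  | negSucc n =>
    rw [zpow_negSucc]
    set y := ((shiftE ^ (n + 1) : Equiv.Perm (ℤ → A))⁻¹) x with hy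
    have h1 : (shiftE ^ (n + 1) : Equiv.Perm (ℤ → A)) y = x := Equiv.apply_symm_apply _ x
    have h2 : ((shiftE ^ (n + 1) : Equiv.Perm (ℤ → A)) y) (i - (n + 1)) = y i := by
      rw [shiftE_pow]; congr 1; push_cast; ring
    rw [h1] at h2
    rw [← h2]
    congr 1

lemma shiftE_zpow_cancel {A : Type*} {x : ℤ → A}
    (hx : ∀ m : ℤ, m ≠ 0 → (shiftE ^ m) x ≠ x) {a b : ℤ}
    (h : (shiftE ^ a) x = (shiftE ^ b) x) : a = b := by
  by_contra hne
  apply hx (a - b) (sub_ne_zero.mpr hne)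
  funext i
  have h2 : x (i - b + a) = x (i - b + b) := by
    have := congrFun h (i - b)
    rwa [shiftE_zpow, shiftE_zpow] at this
  rw [show i - b + a = i + (a - b) from by ring, show i - b + b = i from by ring] at h2
  rw [shiftE_zpow]
  exact h2

lemma periodic_eq_of_agree {A : Type*} {m : ℤ} (hm : m ≠ 0) {x y : ℤ → A}
    (hx : (shiftE ^ m) x = x) (hy : (shiftE ^ m) y = y)
    (h : ∀ j : Fin m.natAbs, x (j : ℤ) = y (j : ℤ)) : x = y := by
  set p : ℤ := (m.natAbs : ℤ) with hp
  have hppos : 0 < p := by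
    have := Int.natAbs_pos.mpr hm
    omega
  have per : ∀ z : ℤ → A, (shiftE ^ m) z = z → ∀ t : ℤ, ∀ i : ℤ, z (i + p * t) = z i := by
    intro z hz
    have base : ∀ i : ℤ, z (i + m) = z i := by
      intro i
      have := congrFun hz i
      rwa [shiftE_zpow] at this
    have basep : ∀ i : ℤ, z (i + p) = z i := by
      intro i
      rcases Int.natAbs_eq m with he | he
      · rw [show p = m from by omega]; exact base i
      · have hpm : p = -m := by omega
        have := base (i + p)
        rw [show i + p + m = i from by omega] at this
        exact this.symm
    have basen : ∀ i : ℤ, z (i - p) = z i := by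
      intro i
      have := basep (i - p)
      rw [show i - p + p = i from by ring] at this
      exact this.symm
    intro t
    induction t using Int.induction_on with
    | zero => simp
    | succ t ih =>
      intro i
      rw [show i + p * (t + 1) = (i + p * t) + p from by ring, basep, ih]
    | pred t ih =>
      intro i
      rw [show i + p * (-t - 1) = (i + p * (-t)) - p from by ring, basen, ih]
  have key : ∀ z : ℤ → A, (shiftE ^ m) z = z → ∀ i : ℤ, z i = z (i % p) := by
    intro z hz i
    have := per z hz (i / p) (i % p)
    rw [show i % p + p * (i / p) = i from Int.emod_add_mul_ediv i p] at this
    exact this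
  funext i
  have h1 : 0 ≤ i % p := Int.emod_nonneg i (by omega)
  have h2 : i % p < p := Int.emod_lt_of_pos i hppos
  have hlt : (i % p).toNat < m.natAbs := by omega
  have := h ⟨(i % p).toNat, hlt⟩
  simp only [Fin.val_mk] at this
  rw [Int.toNat_of_nonneg h1] at this
  rw [key x hx i, key y hy i, this]

section main
variable {A : Type*} [Fintype A] [TopologicalSpace A] [DiscreteTopology A]

lemma sub_compact (Sub : Set (ℤ → A)) (hclosed : IsClosed Sub) : CompactSpace ↥Sub :=
  isCompact_iff_compactSpace.mp hclosed.isCompact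

/-- A continuous integer-valued function on the subshift is constant on deep enough
cylinders, uniformly. -/
lemma exists_window (Sub : Set (ℤ → A)) (hclosed : IsClosed Sub)
    (f : ↥Sub → ℤ) (hf : Continuous f) :
    ∃ l : ℕ, ∀ y z : ↥Sub, (∀ i : ℤ, |i| ≤ (l : ℤ) → (y : ℤ → A) i = (z : ℤ → A) i) →
      f y = f z := by
  haveI : CompactSpace ↥Sub := sub_compact Sub hclosed
  by_contra hcon
  push_neg at hcon
  set t : ℕ → Set (↥Sub × ↥Sub) := fun l =>
    {p | (∀ i : ℤ, |i| ≤ (l : ℤ) → (p.1 : ℤ → A) i = (p.2 : ℤ → A) i) ∧ f p.1 ≠ f p.2}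
    with ht
  have hmono : ∀ l, t (l + 1) ⊆ t l := by
    intro l p hp
    exact ⟨fun i hi => hp.1 i (by push_cast; omega), hp.2⟩
  have hne : ∀ l, (t l).Nonempty := by
    intro l
    obtain ⟨y, z, h1, h2⟩ := hcon l
    exact ⟨(y, z), h1, h2⟩
  have hclosed' : ∀ l, IsClosed (t l) := by
    intro l
    apply IsClosed.inter
    · show IsClosed {p : ↥Sub × ↥Sub | ∀ i : ℤ, |i| ≤ (l : ℤ) → (p.1 : ℤ → A) i = (p.2 : ℤ → A) i}
      have : {p : ↥Sub × ↥Sub | ∀ i : ℤ, |i| ≤ (l : ℤ) → (p.1 : ℤ → A) i = (p.2 : ℤ → A) i}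
          = ⋂ i : ℤ, {p : ↥Sub × ↥Sub | |i| ≤ (l : ℤ) → (p.1 : ℤ → A) i = (p.2 : ℤ → A) i} := by
        ext p; simp [Set.mem_iInter]
      rw [this]
      apply isClosed_iInter
      intro i
      by_cases hi : |i| ≤ (l : ℤ)
      · have : {p : ↥Sub × ↥Sub | |i| ≤ (l : ℤ) → (p.1 : ℤ → A) i = (p.2 : ℤ → A) i}
            = {p : ↥Sub × ↥Sub | (p.1 : ℤ → A) i = (p.2 : ℤ → A) i} := by
          ext p; simp [hi]
        rw [this]
        exact isClosed_eq
          ((continuous_apply i).comp (continuous_subtype_val.comp continuous_fst))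
          ((continuous_apply i).comp (continuous_subtype_val.comp continuous_snd))
      · have : {p : ↥Sub × ↥Sub | |i| ≤ (l : ℤ) → (p.1 : ℤ → A) i = (p.2 : ℤ → A) i}
            = Set.univ := by
          ext p; simp [hi]
        rw [this]; exact isClosed_univ
    · show IsClosed {p : ↥Sub × ↥Sub | f p.1 ≠ f p.2}
      have : {p : ↥Sub × ↥Sub | f p.1 ≠ f p.2}
          = (fun p : ↥Sub × ↥Sub => f p.1 - f p.2) ⁻¹' ({0}ᶜ) := by
        ext p; simp [sub_eq_zero]
      rw [this]
      exact IsClosed.preimage ((hf.comp continuous_fst).sub (hf.comp continuous_snd))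
        (isClosed_discrete _)
  have := IsCompact.nonempty_iInter_of_sequence_nonempty_isCompact_isClosed t hmono hne
    ((hclosed' 0).isCompact) hclosed'
  obtain ⟨p, hp⟩ := this
  simp only [Set.mem_iInter] at hp
  have hag : (p.1 : ℤ → A) = (p.2 : ℤ → A) := by
    funext i
    exact (hp i.natAbs).1 i (by rw [Int.abs_eq_natAbs])
  exact (hp 0).2 (congrArg f (Subtype.ext hag))

/-- Non-periodic points are dense (Baire + no isolated periodic points). -/
lemma dense_nonperiodic (Sub : Set (ℤ → A)) (hclosed : IsClosed Sub)
    (hiso : ∀ x ∈ Sub, (∃ n : ℤ, n ≠ 0 ∧ (shiftE ^ n) x = x) → x ∈ closure (Sub \ {x})) :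
    Dense {z : ↥Sub | ∀ m : ℤ, m ≠ 0 → (shiftE ^ m) (z : ℤ → A) ≠ (z : ℤ → A)} := by
  haveI : CompactSpace ↥Sub := sub_compact Sub hclosed
  haveI : T2Space ↥Sub := inferInstance
  haveI : LocallyCompactSpace ↥Sub := inferInstance
  set U : ℤ → Set ↥Sub := fun m => {z | m = 0 ∨ (shiftE ^ m) (z : ℤ → A) ≠ (z : ℤ → A)}
    with hU
  have hfin : ∀ m : ℤ, m ≠ 0 →
      Set.Finite {z : ↥Sub | (shiftE ^ m) (z : ℤ → A) = (z : ℤ → A)} := by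
    intro m hm
    rw [← Set.finite_coe_iff]
    apply Finite.of_injective
      (f := fun z : {z : ↥Sub | (shiftE ^ m) (z : ℤ → A) = (z : ℤ → A)} =>
        (fun j : Fin m.natAbs => ((z : ↥Sub) : ℤ → A) (j : ℤ)))
    intro z₁ z₂ hz
    have : ((z₁ : ↥Sub) : ℤ → A) = ((z₂ : ↥Sub) : ℤ → A) :=
      periodic_eq_of_agree hm z₁.2 z₂.2 (fun j => congrFun hz j)
    exact Subtype.ext (Subtype.ext this)
  have hUopen : ∀ m, IsOpen (U m) := by
    intro m
    by_cases hm : m = 0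
    · have : U m = Set.univ := by ext z; simp [hU, hm]
      rw [this]; exact isOpen_univ
    · have : U m = {z : ↥Sub | (shiftE ^ m) (z : ℤ → A) = (z : ℤ → A)}ᶜ := by
        ext z; simp [hU, hm]
      rw [this]
      exact ((hfin m hm).isClosed).isOpen_compl
  have hUdense : ∀ m, Dense (U m) := by
    intro m
    by_cases hm : m = 0
    · have : U m = Set.univ := by ext z; simp [hU, hm]
      rw [this]; exact dense_univ
    · have hUe : U m = {z : ↥Sub | (shiftE ^ m) (z : ℤ → A) = (z : ℤ → A)}ᶜ := by
        ext z; simp [hU, hm]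
      rw [hUe, ← interior_eq_empty_iff_dense_compl]
      by_contra hint
      obtain ⟨y, hy⟩ := Set.nonempty_iff_ne_empty.mpr hint
      set F := {z : ↥Sub | (shiftE ^ m) (z : ℤ → A) = (z : ℤ → A)} with hF
      have hyF : y ∈ F := interior_subset hy
      have hVopen : IsOpen (interior F \ (F \ {y})) :=
        IsOpen.sdiff isOpen_interior (((hfin m hm).subset Set.diff_subset).isClosed)
      have hVeq : interior F \ (F \ {y}) = {y} := by
        apply Set.eq_singleton_iff_unique_mem.mpr
        constructor
        · exact ⟨hy, fun h => h.2 rfl⟩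
        · intro z hz
          by_contra hzy
          exact hz.2 ⟨interior_subset hz.1, hzy⟩
      rw [hVeq] at hVopen
      -- y is periodic and isolated: contradiction with hiso
      have hper : (y : ℤ → A) ∈ closure (Sub \ {(y : ℤ → A)}) :=
        hiso (y : ℤ → A) y.2 ⟨m, hm, hyF⟩
      have himg : Subtype.val '' ({y}ᶜ : Set ↥Sub) = Sub \ {((y : ↥Sub) : ℤ → A)} := by
        ext a
        constructor
        · rintro ⟨z, hz, rfl⟩
          exact ⟨z.2, fun h => hz (Subtype.ext h)⟩
        · rintro ⟨ha, hne⟩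
          exact ⟨⟨a, ha⟩, fun h => hne (congrArg Subtype.val h), rfl⟩
      have hcl : y ∈ closure ({y}ᶜ : Set ↥Sub) := by
        rw [closure_subtype, himg]
        exact hper
      obtain ⟨z, hz1, hz2⟩ := mem_closure_iff.mp hcl {y} hVopen rfl
      exact hz2 hz1
  have hdense : Dense (⋂ m : ℤ, U m) := dense_iInter_of_isOpen hUopen hUdense
  apply hdense.mono
  intro z hz m hm
  rcases (Set.mem_iInter.mp hz m) with h | h
  · exact absurd h hm
  · exact h

end main

/-- there is l₀ such that for all n > 0, l > l₀, all h₁,…,hₙ ∈ S with partial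
products g_j = h_j ⋯ h₁, every cylinder C_w of depth l and every non-periodic x ∈ C_w with
max_{j ≤ n} |k_{g_j}(x)| ≤ l - l₀, each orbit cocycle k_{g_j} is constant on C_w. -/
theorem cocycle_constant_on_cylinders {A : Type*} [Fintype A]
    [TopologicalSpace A] [DiscreteTopology A]
    (Sub : Set (ℤ → A)) (hclosed : IsClosed Sub) (hinv : shiftE '' Sub = Sub)
    (hiso : ∀ x ∈ Sub, (∃ n : ℤ, n ≠ 0 ∧ (shiftE ^ n) x = x) → x ∈ closure (Sub \ {x}))
    (S : Finset (Equiv.Perm ↥Sub)) (hSsymm : ∀ s ∈ S, s⁻¹ ∈ S)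
    (k : Equiv.Perm ↥Sub → ↥Sub → ℤ)
    (hk : ∀ g ∈ Subgroup.closure (S : Set (Equiv.Perm ↥Sub)), ∀ x : ↥Sub,
      ((g x : ↥Sub) : ℤ → A) = (shiftE ^ k g x) (x : ℤ → A))
    (hkcont : ∀ g ∈ Subgroup.closure (S : Set (Equiv.Perm ↥Sub)), Continuous (k g)) :
    ∃ l₀ : ℕ, ∀ n : ℕ, 0 < n → ∀ l : ℕ, l₀ < l →
      ∀ hs : List (Equiv.Perm ↥Sub), (∀ s ∈ hs, s ∈ S) → hs.length = n →
      ∀ w : ℤ → A, ∀ x : ↥Sub, (x : ℤ → A) ∈ cylinder Sub w l →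
      (∀ m : ℤ, m ≠ 0 → (shiftE ^ m) (x : ℤ → A) ≠ (x : ℤ → A)) →
      (∀ j : ℕ, j ≤ n → |k ((hs.take j).reverse.prod) x| ≤ (l : ℤ) - (l₀ : ℤ)) →
      ∀ j : ℕ, j ≤ n → ∀ y : ↥Sub, (y : ℤ → A) ∈ cylinder Sub w l →
        k ((hs.take j).reverse.prod) y = k ((hs.take j).reverse.prod) x := by
  classical
  haveI : CompactSpace ↥Sub := sub_compact Sub hclosed
  have hwin : ∀ s : Equiv.Perm ↥Sub, s ∈ S → ∃ m : ℕ, ∀ y z : ↥Sub,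
      (∀ i : ℤ, |i| ≤ (m : ℤ) → (y : ℤ → A) i = (z : ℤ → A) i) → k s y = k s z :=
    fun s hsS => exists_window Sub hclosed (k s) (hkcont s (Subgroup.subset_closure hsS))
  choose! f hf using hwin
  refine ⟨S.sup f, ?_⟩
  set l₀ := S.sup f with hl₀
  have hwin' : ∀ s ∈ S, ∀ y z : ↥Sub,
      (∀ i : ℤ, |i| ≤ (l₀ : ℤ) → (y : ℤ → A) i = (z : ℤ → A) i) → k s y = k s z := by
    intro s hsS y z hagree
    refine hf s hsS y z (fun i hi => hagree i (le_trans hi ?_))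
    exact_mod_cast Finset.le_sup hsS
  intro n hn l hl hs hsS hslen w x hxcyl hxnp hmax
  set NP : Set ↥Sub :=
    {z : ↥Sub | ∀ m : ℤ, m ≠ 0 → (shiftE ^ m) (z : ℤ → A) ≠ (z : ℤ → A)} with hNPdef
  have hNP : Dense NP := dense_nonperiodic Sub hclosed hiso
  set U : Set ↥Sub := {z : ↥Sub | (z : ℤ → A) ∈ cylinder Sub w l} with hUdef
  have hUopen : IsOpen U := by
    have hO : IsOpen (⋂ i ∈ Finset.Icc (-(l : ℤ)) (l : ℤ),
        (fun v : ℤ → A => v i) ⁻¹' {w i}) :=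
      isOpen_biInter_finset fun i _ => (isOpen_discrete {w i}).preimage (continuous_apply i)
    have hUeq : U = Subtype.val ⁻¹' (⋂ i ∈ Finset.Icc (-(l : ℤ)) (l : ℤ),
        (fun v : ℤ → A => v i) ⁻¹' {w i}) := by
      ext z
      simp only [hUdef, Set.mem_setOf_eq, Set.mem_preimage, Set.mem_iInter,
        Finset.mem_Icc, Set.mem_preimage, Set.mem_singleton_iff, cylinder,
        Set.mem_sep_iff]
      constructor
      · rintro ⟨-, hz⟩ i hi
        exact hz i (abs_le.mpr hi)
      · intro hz
        exact ⟨z.2, fun i hi => hz i (abs_le.mp hi)⟩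
    rw [hUeq]
    exact hO.preimage continuous_subtype_val
  have hconst : ∀ g : Equiv.Perm ↥Sub, g ∈ Subgroup.closure (S : Set (Equiv.Perm ↥Sub)) →
      ∀ c : ℤ, (∀ z : ↥Sub, z ∈ U → z ∈ NP → k g z = c) →
      ∀ y : ↥Sub, y ∈ U → k g y = c := by
    intro g hg c hc y hy
    have hT : IsClosed {z : ↥Sub | k g z = c} := by
      have : {z : ↥Sub | k g z = c} = (k g) ⁻¹' {c} := rfl
      rw [this]
      exact (isClosed_discrete _).preimage (hkcont g hg)
    have hsub : U ∩ NP ⊆ {z : ↥Sub | k g z = c} := fun z hz => hc z hz.1 hz.2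
    exact hT.closure_subset ((closure_mono hsub)
      (hNP.open_subset_closure_inter hUopen hy))
  have hgmem : ∀ j : ℕ, (hs.take j).reverse.prod ∈
      Subgroup.closure (S : Set (Equiv.Perm ↥Sub)) := by
    intro j
    refine (Subgroup.closure (S : Set (Equiv.Perm ↥Sub))).list_prod_mem ?_
    intro a ha
    exact Subgroup.subset_closure
      (hsS a (List.take_subset _ _ (List.mem_reverse.mp ha)))
  have hone : ∀ z : ↥Sub, z ∈ NP → k 1 z = 0 := by
    intro z hz
    by_contra hne
    apply hz (k 1 z) hne
    have h1 := hk 1 (one_mem _) z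
    have h2 : ((1 : Equiv.Perm ↥Sub) z : ↥Sub) = z := rfl
    rw [h2] at h1
    exact h1.symm
  intro j
  induction j with
  | zero =>
    intro _ y hy
    simp only [List.take_zero, List.reverse_nil, List.prod_nil]
    rw [hconst 1 (one_mem _) 0 (fun z _ hz => hone z hz) y hy, hone x hxnp]
  | succ j ih =>
    intro hj1 y hy
    have hjn : j ≤ n := Nat.le_of_succ_le hj1
    have hjlt : j < hs.length := by omega
    have htake : hs.take (j + 1) = hs.take j ++ [hs[j]'hjlt] := by
      rw [List.take_succ, List.getElem?_eq_getElem hjlt, Option.toList_some]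
    set h := hs[j]'hjlt with hhdef
    set G := (hs.take j).reverse.prod with hGdef
    have hgsucc : (hs.take (j + 1)).reverse.prod = h * G := by
      rw [htake, List.reverse_append]
      simp [hGdef]
    have hhS : h ∈ S := hsS _ (List.getElem_mem hjlt)
    have hhmem : h ∈ Subgroup.closure (S : Set (Equiv.Perm ↥Sub)) :=
      Subgroup.subset_closure hhS
    set c := k G x with hcdef
    have hcb : |c| ≤ (l : ℤ) - l₀ := hmax j hjn
    have e2 : ((G x : ↥Sub) : ℤ → A) = (shiftE ^ c) (x : ℤ → A) := hk G (hgmem j) x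
    have claim : ∀ z : ↥Sub, z ∈ U → z ∈ NP → k (h * G) z = k h (G x) + c := by
      intro z hzU hzNP
      have hzcyl : (z : ℤ → A) ∈ cylinder Sub w l := hzU
      have hGz : k G z = c := ih hjn z hzcyl
      have e1 : ((G z : ↥Sub) : ℤ → A) = (shiftE ^ c) (z : ℤ → A) := by
        rw [hk G (hgmem j) z, hGz]
      have hag : ∀ i : ℤ, |i| ≤ (l₀ : ℤ) →
          ((G z : ↥Sub) : ℤ → A) i = ((G x : ↥Sub) : ℤ → A) i := by
        intro i hi
        rw [e1, e2, shiftE_zpow, shiftE_zpow]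
        have hic : |i + c| ≤ (l : ℤ) := by
          calc |i + c| ≤ |i| + |c| := abs_add_le _ _
            _ ≤ (l₀ : ℤ) + ((l : ℤ) - l₀) := add_le_add hi hcb
            _ = (l : ℤ) := by ring
        rw [hzcyl.2 (i + c) hic, hxcyl.2 (i + c) hic]
      have hkh : k h (G z) = k h (G x) := hwin' h hhS _ _ hag
      have e3 : (((h * G) z : ↥Sub) : ℤ → A) = (shiftE ^ (k h (G z) + c)) (z : ℤ → A) := by
        have hmul : ((h * G) z : ↥Sub) = h (G z) := rfl
        rw [hmul, hk h hhmem (G z), e1, ← Equiv.Perm.mul_apply, ← zpow_add]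
      have e4 : (((h * G) z : ↥Sub) : ℤ → A) = (shiftE ^ (k (h * G) z)) (z : ℤ → A) :=
        hk (h * G) (mul_mem hhmem (hgmem j)) z
      have := shiftE_zpow_cancel hzNP (e4.symm.trans e3)
      rw [this, hkh]
    rw [hgsucc]
    rw [hconst (h * G) (mul_mem hhmem (hgmem j)) (k h (G x) + c) claim y hy,
      hconst (h * G) (mul_mem hhmem (hgmem j)) (k h (G x) + c) claim x hxcyl]
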